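/- For every nonzero real number z, ∑_{n ∈ NR} e^{nz} = (1/(e^{az} − 1))·∑_{n ∈ N₀} e^{nz} − 1/(e^{z} − 1). -/

import Mathlib

/-- Equation (3.3): the exponential generating formula of the set `NR`:
for nonzero real `z`,
`∑_{n ∈ NR} e^{nz} = (1/(e^{az} − 1))·∑_{n ∈ N₀} e^{nz} − 1/(e^z − 1)`,
where `N₀ = N ∪ {0}`. -/
theorem egf_NR
    (k : ℕ) (a : Fin k → ℕ) (ha : ∀ i, 0 < a i)
    (hgcd : Finset.univ.gcd a = 1)
    (A : ℕ) (hA : 2 ≤ A) (hAmem : ∃ i, a i = A)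
    (NR N : Finset ℕ)
    (hNR : ∀ n : ℕ, n ∈ NR ↔ 0 < n ∧ ¬ ∃ x : Fin k → ℕ, n = ∑ i, a i * x i)
    (hN : ∀ n : ℕ, n ∈ N ↔ 0 < n ∧ (∃ x : Fin k → ℕ, n = ∑ i, a i * x i) ∧
      ¬ ∃ x : Fin k → ℕ, (n : ℤ) - (A : ℤ) = ∑ i, (a i : ℤ) * (x i : ℤ))
    (z : ℝ) (hz : z ≠ 0) :
    ∑ n ∈ NR, Real.exp (n * z) =
      (1 / (Real.exp (A * z) - 1)) * ∑ n ∈ insert 0 N, Real.exp (n * z)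
        - 1 / (Real.exp z - 1) := by
  classical
  set Rep : ℕ → Prop := fun n => ∃ x : Fin k → ℕ, n = ∑ i, a i * x i with hRep
  obtain ⟨i0, hi0⟩ := hAmem
  have hstep : ∀ m : ℕ, Rep m → Rep (m + A) := by
    intro m ⟨x, hxm⟩
    refine ⟨fun i => x i + (if i = i0 then 1 else 0), ?_⟩
    have h1 : ∑ i, a i * (x i + (if i = i0 then 1 else 0))
        = (∑ i, a i * x i) + ∑ i, a i * (if i = i0 then 1 else 0) := by
      rw [← Finset.sum_add_distrib]; congr 1; ext i; ring
    rw [h1, ← hxm]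
    simp [mul_ite, mul_one, mul_zero, Finset.sum_ite_eq', hi0]
  have hRep0 : Rep 0 := ⟨0, by simp⟩
  have hcast : ∀ x : Fin k → ℕ, ((∑ i, a i * x i : ℕ) : ℤ)
      = ∑ i, (a i : ℤ) * (x i : ℤ) := by
    intro x; push_cast; ring
  have hN' : ∀ n : ℕ, n ∈ N ↔ 0 < n ∧ Rep n ∧ ¬ (A ≤ n ∧ Rep (n - A)) := by
    intro n
    rw [hN]
    refine and_congr_right fun _ => and_congr_right fun _ => not_congr ?_
    constructor
    · rintro ⟨x, hx⟩
      have hAn : (A : ℤ) ≤ n := by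
        have h0 : (0:ℤ) ≤ ∑ i, (a i : ℤ) * (x i : ℤ) := by positivity
        omega
      have hAn' : A ≤ n := by exact_mod_cast hAn
      refine ⟨hAn', ⟨x, ?_⟩⟩
      have h2 : ((n - A : ℕ) : ℤ) = ((∑ i, a i * x i : ℕ) : ℤ) := by
        rw [Nat.cast_sub hAn', hx, hcast]
      exact_mod_cast h2
    · rintro ⟨hAn, x, hx⟩
      refine ⟨x, ?_⟩
      rw [← Nat.cast_sub hAn, hx, hcast]
  have hdis1 : Disjoint (NR.image (· + A)) (Finset.range A) := by
    rw [Finset.disjoint_left]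
    rintro n hn hn'
    simp only [Finset.mem_image] at hn
    obtain ⟨m, hm, rfl⟩ := hn
    simp only [Finset.mem_range] at hn'
    omega
  have hdis2 : Disjoint NR (insert 0 N) := by
    rw [Finset.disjoint_left]
    intro n hn hn'
    rw [hNR] at hn
    rcases Finset.mem_insert.1 hn' with rfl | h
    · exact absurd hn.1 (by omega)
    · exact hn.2 ((hN' n).1 h).2.1
  have hset : NR.image (· + A) ∪ Finset.range A = NR ∪ insert 0 N := by
    ext n
    simp only [Finset.mem_union, Finset.mem_image, Finset.mem_range, Finset.mem_insert]
    rcases lt_or_ge n A with hnA | hnA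
    · constructor
      · intro _
        rcases Nat.eq_zero_or_pos n with rfl | hn
        · right; left; rfl
        by_cases hr : Rep n
        · right; right; rw [hN']
          exact ⟨hn, hr, fun h => by omega⟩
        · left; rw [hNR]; exact ⟨hn, hr⟩
      · intro _; right; exact hnA
    · by_cases hr : Rep (n - A)
      · have hrn : Rep n := by
          have h3 := hstep _ hr
          rwa [Nat.sub_add_cancel hnA] at h3
        constructor
        · rintro (⟨m, hm, rfl⟩ | h)
          · exact absurd (by simpa using hr) ((hNR m).1 hm).2
          · omega
        · rintro (h | rfl | h)
          · exact absurd hrn ((hNR n).1 h).2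
          · omega
          · exact absurd ⟨hnA, hr⟩ ((hN' n).1 h).2.2
      · have hn0 : A < n := by
          rcases eq_or_lt_of_le hnA with rfl | h
          · exact absurd (by simpa using hRep0) hr
          · exact h
        constructor
        · intro _
          by_cases hrn : Rep n
          · right; right; rw [hN']
            exact ⟨by omega, hrn, fun h => hr h.2⟩
          · left; rw [hNR]; exact ⟨by omega, hrn⟩
        · intro _
          left; exact ⟨n - A, (hNR _).2 ⟨by omega, hr⟩, by omega⟩
  -- now the algebra
  set x := Real.exp z with hxdef
  have hx1 : x ≠ 1 := by
    rw [hxdef, Ne, Real.exp_eq_one_iff]; exact hz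
  have hAz : Real.exp (A * z) = x ^ A := Real.exp_nat_mul z A
  have hxA1 : x ^ A ≠ 1 := by
    rw [← hAz, Ne, Real.exp_eq_one_iff]
    exact mul_ne_zero (by positivity) hz
  have hexp : ∀ n : ℕ, Real.exp (n * z) = x ^ n := fun n => Real.exp_nat_mul z n
  simp only [hexp, hAz]
  -- key sum identity
  have key : (∑ n ∈ NR, x ^ n) * x ^ A + ∑ j ∈ Finset.range A, x ^ j
      = (∑ n ∈ NR, x ^ n) + ∑ n ∈ insert 0 N, x ^ n := by
    have h1 : ∑ n ∈ NR.image (· + A), x ^ n = (∑ n ∈ NR, x ^ n) * x ^ A := by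
      rw [Finset.sum_image (by intro m _ m' _ h; exact Nat.add_right_cancel h)]
      rw [Finset.sum_mul]
      exact Finset.sum_congr rfl fun n _ => pow_add x n A
    calc (∑ n ∈ NR, x ^ n) * x ^ A + ∑ j ∈ Finset.range A, x ^ j
        = ∑ n ∈ (NR.image (· + A)) ∪ Finset.range A, x ^ n := by
          rw [Finset.sum_union hdis1, h1]
      _ = ∑ n ∈ NR ∪ insert 0 N, x ^ n := by rw [hset]
      _ = (∑ n ∈ NR, x ^ n) + ∑ n ∈ insert 0 N, x ^ n := Finset.sum_union hdis2
  have geo : (∑ j ∈ Finset.range A, x ^ j) * (x - 1) = x ^ A - 1 := geom_sum_mul x A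
  have hd1 : x ^ A - 1 ≠ 0 := sub_ne_zero.2 hxA1
  have hd2 : x - 1 ≠ 0 := sub_ne_zero.2 hx1
  field_simp
  linear_combination (x - 1) * key - geo
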